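/- Let V be a 6-dimensional real vector space and ω an alternating 3-form on V with Δ(ω) = {0}. Fix a nonzero alternating 6-form θ on V and let Q : V → V be the unique linear map with (ι_vω)∧ω = ι_{Q(v)}θ for all v ∈ V. Then Q is a linear automorphism of V, and for every v ≠ 0 the vectors v and Q(v) are linearly independent. -/

import Mathlib

open scoped TensorProduct

/-- The wedge product of real-valued alternating forms
(antisymmetrized shuffle-sum convention, via `AlternatingMap.domCoprod`). -/
noncomputable def wedge {V : Type*} [AddCommGroup V] [Module ℝ V] {p q : ℕ}
    (α : V [⋀^Fin p]→ₗ[ℝ] ℝ) (β : V [⋀^Fin q]→ₗ[ℝ] ℝ) : V [⋀^Fin (p + q)]→ₗ[ℝ] ℝ :=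
  ((LinearMap.mul' ℝ ℝ).compAlternatingMap (α.domCoprod β)).domDomCongr finSumFinEquiv

/-- The interior product `ι_v ω = ω(v, ·, …, ·)`. -/
noncomputable def iota {V : Type*} [AddCommGroup V] [Module ℝ V] {n : ℕ}
    (v : V) (ω : V [⋀^Fin (n + 1)]→ₗ[ℝ] ℝ) : V [⋀^Fin n]→ₗ[ℝ] ℝ :=
  ω.curryLeft v

/-- `Δ(ω) = {v ∈ V : (ι_v ω) ∧ (ι_v ω) = 0}` for a 3-form `ω`. -/
noncomputable def Delta {V : Type*} [AddCommGroup V] [Module ℝ V]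
    (ω : V [⋀^Fin 3]→ₗ[ℝ] ℝ) : Set V :=
  {v | wedge (iota v ω) (iota v ω) = 0}

/-- A form is multisymplectic iff `v ↦ ι_v ω` is injective. -/
noncomputable def Multisymplectic {V : Type*} [AddCommGroup V] [Module ℝ V] {n : ℕ}
    (ω : V [⋀^Fin (n + 1)]→ₗ[ℝ] ℝ) : Prop :=
  Function.Injective fun v : V => iota v ω

section helpers
variable {V : Type*} [AddCommGroup V] [Module ℝ V]

open Equiv

lemma smul_wedge_apply {p q : ℕ} (α : V [⋀^Fin p]→ₗ[ℝ] ℝ) (β : V [⋀^Fin q]→ₗ[ℝ] ℝ)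
    (z : Fin (p + q) → V) :
    (p.factorial * q.factorial) • wedge α β z =
      ∑ σ : Equiv.Perm (Fin p ⊕ Fin q), (Equiv.Perm.sign σ : ℤ) •
        (α (fun i => z (finSumFinEquiv (σ (Sum.inl i)))) *
         β (fun i => z (finSumFinEquiv (σ (Sum.inr i))))) := by
  have h := MultilinearMap.domCoprod_alternization_eq α β
  rw [Fintype.card_fin, Fintype.card_fin] at h
  have h1 : wedge α β z
      = LinearMap.mul' ℝ ℝ ((α.domCoprod β) (fun i => z (finSumFinEquiv i))) := rfl
  rw [h1, ← map_nsmul, ← AlternatingMap.smul_apply, ← h,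
    MultilinearMap.alternatization_apply, map_sum]
  refine Finset.sum_congr rfl fun σ _ => ?_
  rw [MultilinearMap.domDomCongr_apply, Units.smul_def, map_zsmul]
  congr 1
end helpers


/-- `Fin.cons` with a non-dependent type, to ease elaboration. -/
def zc {V : Type*} (v : V) (x : Fin 4 → V) : Fin 5 → V := Fin.cons v x

@[simp] lemma zc_zero {V : Type*} (v : V) (x : Fin 4 → V) : zc v x 0 = v := rfl
@[simp] lemma zc_succ {V : Type*} (v : V) (x : Fin 4 → V) (i : Fin 4) :
    zc v x i.succ = x i := rfl

section spec
variable {V : Type*} [AddCommGroup V] [Module ℝ V]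
open Equiv

@[simp] lemma cons3_two {W : Type*} (a : W) (f : Fin 2 → W) : (Fin.cons a f : Fin 3 → W) 2 = f 1 := rfl

lemma iota_apply {n : ℕ} (v : V) (μ : V [⋀^Fin (n+1)]→ₗ[ℝ] ℝ) (y : Fin n → V) :
    iota v μ y = μ (Fin.cons v y) := rfl

lemma twelve_eval (ω : V [⋀^Fin 3]→ₗ[ℝ] ℝ) (v : V) (x : Fin 4 → V) :
    (12 : ℝ) * wedge (iota v ω) ω (zc v x) =
      ∑ σ : Equiv.Perm (Fin 5), ((Equiv.Perm.sign σ : ℤ) : ℝ) *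
        (ω ![v, zc v x (σ 0), zc v x (σ 1)] *
         ω ![zc v x (σ 2), zc v x (σ 3), zc v x (σ 4)]) := by
  have h := smul_wedge_apply (iota v ω) ω (zc v x)
  norm_num [Nat.factorial] at h
  rw [h]
  refine Fintype.sum_equiv (Equiv.permCongr finSumFinEquiv) _ _ fun σ => ?_
  rw [Equiv.Perm.sign_permCongr]
  have k0 : finSumFinEquiv.symm (0 : Fin (2+3)) = Sum.inl 0 := by decide
  have k1 : finSumFinEquiv.symm (1 : Fin (2+3)) = Sum.inl 1 := by decide
  have k2 : finSumFinEquiv.symm (2 : Fin (2+3)) = Sum.inr 0 := by decide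
  have k3 : finSumFinEquiv.symm (3 : Fin (2+3)) = Sum.inr 1 := by decide
  have k4 : finSumFinEquiv.symm (4 : Fin (2+3)) = Sum.inr 2 := by decide
  congr 1
  rw [iota_apply]
  congr 1
  · congr 1
    funext j
    fin_cases j <;>
      simp [Equiv.permCongr_apply, k0, k1]
  · congr 1
    funext j
    fin_cases j <;>
      simp [Equiv.permCongr_apply, k2, k3, k4]

lemma four_eval (ω : V [⋀^Fin 3]→ₗ[ℝ] ℝ) (v : V) (x : Fin 4 → V) :
    (4 : ℝ) * wedge (iota v ω) (iota v ω) x =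
      ∑ τ : Equiv.Perm (Fin 4), ((Equiv.Perm.sign τ : ℤ) : ℝ) *
        (ω ![v, x (τ 0), x (τ 1)] * ω ![v, x (τ 2), x (τ 3)]) := by
  have h := smul_wedge_apply (iota v ω) (iota v ω) x
  norm_num [Nat.factorial] at h
  rw [h]
  refine Fintype.sum_equiv (Equiv.permCongr finSumFinEquiv) _ _ fun σ => ?_
  rw [Equiv.Perm.sign_permCongr]
  have k0 : finSumFinEquiv.symm (0 : Fin (2+2)) = Sum.inl 0 := by decide
  have k1 : finSumFinEquiv.symm (1 : Fin (2+2)) = Sum.inl 1 := by decide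
  have k2 : finSumFinEquiv.symm (2 : Fin (2+2)) = Sum.inr 0 := by decide
  have k3 : finSumFinEquiv.symm (3 : Fin (2+2)) = Sum.inr 1 := by decide
  congr 1
  rw [iota_apply, iota_apply]
  congr 1
  · congr 1
    funext j
    fin_cases j <;> simp [Equiv.permCongr_apply, k0, k1]
  · congr 1
    funext j
    fin_cases j <;> simp [Equiv.permCongr_apply, k2, k3]
end spec

section ksi
variable {V : Type*} [AddCommGroup V] [Module ℝ V]
open Equiv Equiv.Perm

lemma omega_swap01 (ω : V [⋀^Fin 3]→ₗ[ℝ] ℝ) (a b c : V) : ω ![b, a, c] = - ω ![a, b, c] := by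
  have h := ω.map_swap ![a, b, c] (show (0 : Fin 3) ≠ 1 by decide)
  rw [← h]
  congr 1
  funext j
  fin_cases j <;> simp [Equiv.swap_apply_def]

lemma omega_swap02 (ω : V [⋀^Fin 3]→ₗ[ℝ] ℝ) (a b c : V) : ω ![c, b, a] = - ω ![a, b, c] := by
  have h := ω.map_swap ![a, b, c] (show (0 : Fin 3) ≠ 2 by decide)
  rw [← h]
  congr 1
  funext j
  fin_cases j <;> simp [Equiv.swap_apply_def]

private lemma mem_fiber_iff (σ : Equiv.Perm (Fin 5)) (p : Fin 5) :
    σ⁻¹ 0 = p ↔ σ p = 0 := by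
  rw [Equiv.Perm.inv_eq_iff_eq, eq_comm]

private lemma decomposeFin_fst {n : ℕ} (s : Equiv.Perm (Fin (n+1))) :
    (Equiv.Perm.decomposeFin s).1 = s 0 := by
  conv_rhs => rw [← Equiv.symm_apply_apply Equiv.Perm.decomposeFin s,
    ← Prod.mk.eta (p := Equiv.Perm.decomposeFin s)]
  rw [Equiv.Perm.decomposeFin_symm_apply_zero]

lemma ksi (ω : V [⋀^Fin 3]→ₗ[ℝ] ℝ) (v : V) (x : Fin 4 → V) :
    ∑ σ : Equiv.Perm (Fin 5), ((Equiv.Perm.sign σ : ℤ) : ℝ) *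
        (ω ![v, zc v x (σ 0), zc v x (σ 1)] *
         ω ![zc v x (σ 2), zc v x (σ 3), zc v x (σ 4)]) =
    3 * ∑ τ : Equiv.Perm (Fin 4), ((Equiv.Perm.sign τ : ℤ) : ℝ) *
        (ω ![v, x (τ 0), x (τ 1)] * ω ![v, x (τ 2), x (τ 3)]) := by
  set F : Equiv.Perm (Fin 5) → ℝ := fun σ => ((Equiv.Perm.sign σ : ℤ) : ℝ) *
        (ω ![v, zc v x (σ 0), zc v x (σ 1)] *
         ω ![zc v x (σ 2), zc v x (σ 3), zc v x (σ 4)]) with hF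
  set G : Equiv.Perm (Fin 4) → ℝ := fun τ => ((Equiv.Perm.sign τ : ℤ) : ℝ) *
        (ω ![v, x (τ 0), x (τ 1)] * ω ![v, x (τ 2), x (τ 3)]) with hG
  have hfib := Finset.sum_fiberwise_eq_sum_filter Finset.univ Finset.univ
      (fun σ : Equiv.Perm (Fin 5) => σ⁻¹ 0) F
  simp only [Finset.mem_univ, Finset.filter_true] at hfib
  rw [← hfib, Fin.sum_univ_five]
  -- the fiber sums
  have h0 : ∑ σ ∈ Finset.univ.filter (fun σ : Equiv.Perm (Fin 5) => σ⁻¹ 0 = 0), F σ = 0 := by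
    refine Finset.sum_eq_zero fun σ hσ => ?_
    rw [Finset.mem_filter] at hσ
    have hz : σ 0 = 0 := (mem_fiber_iff σ 0).mp hσ.2
    have hzero : ω ![v, v, zc v x (σ 1)] = 0 :=
      ω.map_eq_zero_of_eq _ (i := 0) (j := 1) (by simp) (by decide)
    simp [hF, hz, hzero]
  have h1 : ∑ σ ∈ Finset.univ.filter (fun σ : Equiv.Perm (Fin 5) => σ⁻¹ 0 = 1), F σ = 0 := by
    refine Finset.sum_eq_zero fun σ hσ => ?_
    rw [Finset.mem_filter] at hσ
    have hz : σ 1 = 0 := (mem_fiber_iff σ 1).mp hσ.2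
    have hzero : ω ![v, zc v x (σ 0), v] = 0 :=
      ω.map_eq_zero_of_eq _ (i := 0) (j := 2) (by simp) (by decide)
    simp [hF, hz, hzero]
  have h3 : ∑ σ ∈ Finset.univ.filter (fun σ : Equiv.Perm (Fin 5) => σ⁻¹ 0 = 3), F σ =
      ∑ σ ∈ Finset.univ.filter (fun σ : Equiv.Perm (Fin 5) => σ⁻¹ 0 = 2), F σ := by
    refine Finset.sum_bij' (fun σ _ => σ * Equiv.swap 2 3) (fun σ _ => σ * Equiv.swap 2 3)
      (fun σ hσ => ?_) (fun σ hσ => ?_) (fun σ _ => by simp [mul_assoc])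
      (fun σ _ => by simp [mul_assoc]) (fun σ hσ => ?_)
    · rw [Finset.mem_filter] at hσ ⊢
      refine ⟨Finset.mem_univ _, ?_⟩
      rw [mem_fiber_iff] at hσ ⊢
      simpa using hσ.2
    · rw [Finset.mem_filter] at hσ ⊢
      refine ⟨Finset.mem_univ _, ?_⟩
      rw [mem_fiber_iff] at hσ ⊢
      simpa using hσ.2
    · have e2 : Equiv.swap (2 : Fin 5) 3 0 = 0 := by decide
      have e3 : Equiv.swap (2 : Fin 5) 3 1 = 1 := by decide
      have e4 : Equiv.swap (2 : Fin 5) 3 2 = 3 := by decide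
      have e5 : Equiv.swap (2 : Fin 5) 3 3 = 2 := by decide
      have e6 : Equiv.swap (2 : Fin 5) 3 4 = 4 := by decide
      simp only [hF, Equiv.Perm.mul_apply, e2, e3, e4, e5, e6, Equiv.Perm.sign_mul,
        Equiv.Perm.sign_swap (show (2 : Fin 5) ≠ 3 by decide), Units.val_mul]
      rw [omega_swap01 ω (zc v x (σ 2)) (zc v x (σ 3)) (zc v x (σ 4))]
      push_cast
      ring
  have h4 : ∑ σ ∈ Finset.univ.filter (fun σ : Equiv.Perm (Fin 5) => σ⁻¹ 0 = 4), F σ =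
      ∑ σ ∈ Finset.univ.filter (fun σ : Equiv.Perm (Fin 5) => σ⁻¹ 0 = 2), F σ := by
    refine Finset.sum_bij' (fun σ _ => σ * Equiv.swap 2 4) (fun σ _ => σ * Equiv.swap 2 4)
      (fun σ hσ => ?_) (fun σ hσ => ?_) (fun σ _ => by simp [mul_assoc])
      (fun σ _ => by simp [mul_assoc]) (fun σ hσ => ?_)
    · rw [Finset.mem_filter] at hσ ⊢
      refine ⟨Finset.mem_univ _, ?_⟩
      rw [mem_fiber_iff] at hσ ⊢
      simpa using hσ.2
    · rw [Finset.mem_filter] at hσ ⊢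
      refine ⟨Finset.mem_univ _, ?_⟩
      rw [mem_fiber_iff] at hσ ⊢
      simpa using hσ.2
    · have e2 : Equiv.swap (2 : Fin 5) 4 0 = 0 := by decide
      have e3 : Equiv.swap (2 : Fin 5) 4 1 = 1 := by decide
      have e4 : Equiv.swap (2 : Fin 5) 4 2 = 4 := by decide
      have e5 : Equiv.swap (2 : Fin 5) 4 3 = 3 := by decide
      have e6 : Equiv.swap (2 : Fin 5) 4 4 = 2 := by decide
      simp only [hF, Equiv.Perm.mul_apply, e2, e3, e4, e5, e6, Equiv.Perm.sign_mul,
        Equiv.Perm.sign_swap (show (2 : Fin 5) ≠ 4 by decide), Units.val_mul]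
      rw [omega_swap02 ω (zc v x (σ 2)) (zc v x (σ 3)) (zc v x (σ 4))]
      push_cast
      ring
  have h2 : ∑ σ ∈ Finset.univ.filter (fun σ : Equiv.Perm (Fin 5) => σ⁻¹ 0 = 2), F σ =
      ∑ τ : Equiv.Perm (Fin 4), G τ := by
    symm
    set ρ : Equiv.Perm (Fin 5) := Equiv.swap 0 1 * Equiv.swap 1 2 with hρ
    have hρ0 : ρ 0 = 1 := by decide
    have hρ1 : ρ 1 = 2 := by decide
    have hρ2 : ρ 2 = 0 := by decide
    have hρ3 : ρ 3 = 3 := by decide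
    have hρ4 : ρ 4 = 4 := by decide
    have hsρ : Equiv.Perm.sign ρ = 1 := by
      rw [hρ, map_mul, Equiv.Perm.sign_swap (by decide), Equiv.Perm.sign_swap (by decide)]
      norm_num
    have husucc : ∀ (τ : Equiv.Perm (Fin 4)) (i : Fin 4),
        (Equiv.Perm.decomposeFin.symm (0, τ)) i.succ = (τ i).succ := by
      intro τ i
      rw [Equiv.Perm.decomposeFin_symm_apply_succ]
      simp
    refine Finset.sum_bij' (fun τ _ => Equiv.Perm.decomposeFin.symm (0, τ) * ρ)
      (fun σ _ => (Equiv.Perm.decomposeFin (σ * ρ⁻¹)).2)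
      (fun τ _ => ?_) (fun σ hσ => Finset.mem_univ _) (fun τ _ => ?_) (fun σ hσ => ?_)
      (fun τ _ => ?_)
    · rw [Finset.mem_filter]
      refine ⟨Finset.mem_univ _, ?_⟩
      rw [mem_fiber_iff]
      rw [Equiv.Perm.mul_apply, hρ2, Equiv.Perm.decomposeFin_symm_apply_zero]
    · -- left inverse
      rw [mul_assoc, mul_inv_cancel, mul_one, Equiv.apply_symm_apply]
    · -- right inverse
      rw [Finset.mem_filter, mem_fiber_iff] at hσ
      have h00 : (σ * ρ⁻¹) 0 = 0 := by
        rw [Equiv.Perm.mul_apply]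
        have : ρ⁻¹ 0 = 2 := by rw [Equiv.Perm.inv_eq_iff_eq, hρ2]
        rw [this, hσ.2]
      have hd : Equiv.Perm.decomposeFin (σ * ρ⁻¹) = (0, (Equiv.Perm.decomposeFin (σ * ρ⁻¹)).2) := by
        rw [← Prod.mk.eta (p := Equiv.Perm.decomposeFin (σ * ρ⁻¹)), decomposeFin_fst, h00]
      rw [← hd, Equiv.symm_apply_apply, mul_assoc, inv_mul_cancel, mul_one]
    · -- term identity : G τ = F (Φ τ)
      have a0 : (Equiv.Perm.decomposeFin.symm (0, τ) * ρ) 0 = (τ 0).succ := by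
        rw [Equiv.Perm.mul_apply, hρ0, show (1 : Fin 5) = Fin.succ 0 by decide, husucc]
      have a1 : (Equiv.Perm.decomposeFin.symm (0, τ) * ρ) 1 = (τ 1).succ := by
        rw [Equiv.Perm.mul_apply, hρ1, show (2 : Fin 5) = Fin.succ 1 by decide, husucc]
      have a2 : (Equiv.Perm.decomposeFin.symm (0, τ) * ρ) 2 = 0 := by
        rw [Equiv.Perm.mul_apply, hρ2, Equiv.Perm.decomposeFin_symm_apply_zero]
      have a3 : (Equiv.Perm.decomposeFin.symm (0, τ) * ρ) 3 = (τ 2).succ := by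
        rw [Equiv.Perm.mul_apply, hρ3, show (3 : Fin 5) = Fin.succ 2 by decide, husucc]
      have a4 : (Equiv.Perm.decomposeFin.symm (0, τ) * ρ) 4 = (τ 3).succ := by
        rw [Equiv.Perm.mul_apply, hρ4, show (4 : Fin 5) = Fin.succ 3 by decide, husucc]
      have hs : Equiv.Perm.sign (Equiv.Perm.decomposeFin.symm (0, τ) * ρ) =
          Equiv.Perm.sign τ := by
        rw [map_mul, hsρ, Equiv.Perm.decomposeFin.symm_sign, if_pos rfl]
        simp
      simp [hF, hG, a0, a1, a2, a3, a4, hs]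
  rw [h0, h1, h2, h3, h4, h2]
  ring
end ksi

section final
variable {V : Type*} [AddCommGroup V] [Module ℝ V]

lemma key_identity (ω : V [⋀^Fin 3]→ₗ[ℝ] ℝ) (v : V) :
    iota v ((wedge (iota v ω) ω : V [⋀^Fin (2+3)]→ₗ[ℝ] ℝ)) = wedge (iota v ω) (iota v ω) := by
  ext x
  have h12 : (12 : ℝ) * (wedge (iota v ω) ω (zc v x)) =
      (12 : ℝ) * (wedge (iota v ω) (iota v ω) x) := by
    rw [twelve_eval, ksi]
    rw [← four_eval]
    ring
  have h := mul_left_cancel₀ (show (12 : ℝ) ≠ 0 by norm_num) h12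
  rw [iota_apply, show Fin.cons v x = zc v x from rfl]
  exact h

end final

/-- If `Δ(ω) = {0}`, the map `Q` with `(ι_v ω) ∧ ω = ι_{Q v} θ` is an automorphism of `V`,
and for every `v ≠ 0` the vectors `v` and `Q v` are linearly independent. -/
theorem Q_bijective_and_linearIndependent
    {V : Type*} [AddCommGroup V] [Module ℝ V] [FiniteDimensional ℝ V]
    (hV : Module.finrank ℝ V = 6)
    (ω : V [⋀^Fin 3]→ₗ[ℝ] ℝ) (hΔ : Delta ω = {0})
    (θ : V [⋀^Fin 6]→ₗ[ℝ] ℝ) (hθ : θ ≠ 0)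
    (Q : V →ₗ[ℝ] V) (hQ : ∀ v : V, wedge (iota v ω) ω = iota (Q v) θ) :
    Function.Bijective Q ∧ ∀ v : V, v ≠ 0 → LinearIndependent ℝ ![v, Q v] := by
  have hzero : ∀ (w : V) (c : ℝ), Q w = c • w → w = 0 := by
    intro w c h
    have h1 : iota (Q w) θ = c • iota w θ := by
      rw [h]
      exact (θ.curryLeft).map_smul c w
    have h3 : iota w (c • iota w θ) = c • iota w (iota w θ) := by
      show ((c • (iota w θ)).curryLeft) w = _
      rw [AlternatingMap.curryLeft_smul, LinearMap.smul_apply]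
      rfl
    have h4 : iota w (iota w θ) = 0 := AlternatingMap.curryLeft_same θ w
    have h2 : wedge (iota w ω) (iota w ω) = 0 := by
      rw [← key_identity ω w, hQ w, h1, h3, h4, smul_zero]
    have hmem : w ∈ Delta ω := h2
    rw [hΔ] at hmem
    exact hmem
  have hinj : Function.Injective Q := by
    intro a b hab
    have h5 : Q (a - b) = 0 := by rw [map_sub, hab, sub_self]
    have h6 := hzero (a - b) 0 (by rw [h5, zero_smul])
    exact sub_eq_zero.mp h6
  refine ⟨⟨hinj, (LinearMap.injective_iff_surjective).mp hinj⟩, ?_⟩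
  intro v hv
  rw [LinearIndependent.pair_iff]
  intro s t hst
  by_cases ht : t = 0
  · subst ht
    rw [zero_smul, add_zero] at hst
    rcases smul_eq_zero.mp hst with h | h
    · exact ⟨h, rfl⟩
    · exact absurd h hv
  · exfalso
    have h6 : t • Q v = (-s) • v := by
      rw [neg_smul, eq_neg_iff_add_eq_zero, add_comm]
      exact hst
    have h5 : Q v = (t⁻¹ * (-s)) • v := by
      calc Q v = t⁻¹ • (t • Q v) := by rw [smul_smul, inv_mul_cancel₀ ht, one_smul]
      _ = t⁻¹ • ((-s) • v) := by rw [h6]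
      _ = (t⁻¹ * (-s)) • v := by rw [smul_smul]
    exact hv (hzero v _ h5)
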